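/- For every μ with 0 < μ < μ* (where μ* = (3/2)(104-60√3)^{1/3}), the equation G(y) - y G'(y) + y = 0 with G(y) = (1-μy)^{2/3} has exactly one real root y_p, and y_p < 0. -/

import Mathlib

set_option maxHeartbeats 1000000


/-- For `0 < μ < μ*`, the equation `G - y G' + y = 0` with
`G(y) = (1-μy)^{2/3}` has exactly one real root `y_p`, and `y_p < 0`. -/
theorem stmt_5 (μ : ℝ) (hμ0 : 0 < μ)
    (hμs : μ < (3 / 2) * (104 - 60 * Real.sqrt 3) ^ ((1 : ℝ) / 3))
    (G : ℝ → ℝ) (hG : ∀ y, G y = (1 - μ * y) ^ ((2 : ℝ) / 3)) :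
    ∃ yp : ℝ, yp < 0 ∧ G yp - yp * deriv G yp + yp = 0 ∧
      ∀ z : ℝ, 1 - μ * z > 0 → G z - z * deriv G z + z = 0 → z = yp := by
  -- basic bound: μ < 9/2
  have hs3 : Real.sqrt 3 ^ 2 = 3 := Real.sq_sqrt (by norm_num)
  have hs3n : 0 ≤ Real.sqrt 3 := Real.sqrt_nonneg 3
  have hs3lb : (1.7 : ℝ) ≤ Real.sqrt 3 := by nlinarith
  have ha0 : (0:ℝ) ≤ 104 - 60 * Real.sqrt 3 := by nlinarith
  have ha27 : (104 - 60 * Real.sqrt 3 : ℝ) ≤ 27 := by nlinarith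
  have h27 : ((27:ℝ)) ^ ((1:ℝ)/3) = 3 := by
    have h3 : ((27:ℝ)) = 3 ^ (3:ℝ) := by
      rw [show (3:ℝ) ^ (3:ℝ) = 3 ^ (3:ℕ) from Real.rpow_natCast 3 3]; norm_num
    rw [h3, ← Real.rpow_mul (by norm_num : (0:ℝ) ≤ 3)]
    norm_num
  have hcube : (104 - 60 * Real.sqrt 3 : ℝ) ^ ((1:ℝ)/3) ≤ 3 := by
    calc (104 - 60 * Real.sqrt 3 : ℝ) ^ ((1:ℝ)/3)
        ≤ (27:ℝ) ^ ((1:ℝ)/3) := Real.rpow_le_rpow ha0 ha27 (by norm_num)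
      _ = 3 := h27
  have hμ92 : μ < 9/2 := by nlinarith
  -- derivative of G
  have hinner : ∀ y : ℝ, HasDerivAt (fun t : ℝ => 1 - μ * t) (-μ) y := by
    intro y
    simpa using ((hasDerivAt_id y).const_mul μ).const_sub 1
  have hGf : G = fun t => (1 - μ * t) ^ ((2:ℝ)/3) := funext hG
  have hderivG : ∀ y : ℝ, 1 - μ * y > 0 →
      HasDerivAt G ((2:ℝ)/3 * (1 - μ*y) ^ ((2:ℝ)/3 - 1) * (-μ)) y := by
    intro y hy
    have h2 := (Real.hasDerivAt_rpow_const (p := (2:ℝ)/3) (Or.inl (ne_of_gt hy)))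
    have h3 := h2.comp y (hinner y)
    rw [hGf]
    exact h3
  -- F : the explicit expression for G - y G' + y
  set F : ℝ → ℝ := fun y =>
    (1 - μ*y) ^ ((2:ℝ)/3) - y * ((2:ℝ)/3 * (1 - μ*y) ^ ((2:ℝ)/3 - 1) * (-μ)) + y
    with hFdef
  have hEF : ∀ y : ℝ, 1 - μ * y > 0 → G y - y * deriv G y + y = F y := by
    intro y hy
    rw [hG y, (hderivG y hy).deriv]
  -- derivative of F
  set D : ℝ → ℝ := fun y => 1 + 2*μ^2/9 * y * (1 - μ*y) ^ (-(4:ℝ)/3) with hDdef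
  have hD : ∀ y : ℝ, 1 - μ * y > 0 → HasDerivAt F (D y) y := by
    intro y hy
    have hA := (Real.hasDerivAt_rpow_const (p := (2:ℝ)/3)
      (Or.inl (ne_of_gt hy))).comp y (hinner y)
    have hB := (Real.hasDerivAt_rpow_const (p := (2:ℝ)/3 - 1)
      (Or.inl (ne_of_gt hy))).comp y (hinner y)
    have hg : HasDerivAt (fun t : ℝ => (2:ℝ)/3 * (1 - μ*t) ^ ((2:ℝ)/3 - 1) * (-μ))
        ((2:ℝ)/3 * (((2:ℝ)/3 - 1) * (1 - μ*y) ^ ((2:ℝ)/3 - 1 - 1) * (-μ)) * (-μ)) y :=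
      (hB.const_mul ((2:ℝ)/3)).mul_const (-μ)
    have hmid := (hasDerivAt_id y).mul hg
    have hF' := (hA.sub hmid).add (hasDerivAt_id y)
    have hexp : (1 - μ*y) ^ ((2:ℝ)/3 - 1 - 1) = (1 - μ*y) ^ (-(4:ℝ)/3) := by
      norm_num
    rw [hexp] at hF'
    convert hF' using 1
    case e'_4 => rfl
    case e'_5 => rfl
    case e'_8 => rfl
    rw [hDdef]
    simp only [id_eq]
    ring
  -- positivity of D on Iio (1/μ)
  have hDpos : ∀ y : ℝ, 1 - μ * y > 0 → 0 < D y := by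
    intro y hy
    have hx4 : 0 < (1 - μ*y) ^ (-(4:ℝ)/3) := Real.rpow_pos_of_pos hy _
    rcases le_or_gt 0 y with h0 | h0
    · have : 0 ≤ 2*μ^2/9 * y * (1 - μ*y) ^ (-(4:ℝ)/3) := by positivity
      rw [hDdef]; dsimp only; linarith
    · -- y < 0 : 1 - μ*y > 1
      have hx1 : (1:ℝ) < 1 - μ*y := by nlinarith
      have hμy : μ * (-y) ≤ 1 - μ*y := by nlinarith
      have hxe : (1 - μ*y) ^ (-(4:ℝ)/3) * (1 - μ*y) = (1 - μ*y) ^ (-(1:ℝ)/3) := by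
        rw [← Real.rpow_add_one (by linarith : (1 - μ*y) ≠ 0) (-(4:ℝ)/3)]
        norm_num
      have hle1 : (1 - μ*y) ^ (-(1:ℝ)/3) ≤ 1 :=
        Real.rpow_le_one_of_one_le_of_nonpos hx1.le (by norm_num)
      have hkey : μ * (-y) * (1 - μ*y) ^ (-(4:ℝ)/3) ≤ 1 := by
        calc μ * (-y) * (1 - μ*y) ^ (-(4:ℝ)/3)
            ≤ (1 - μ*y) * (1 - μ*y) ^ (-(4:ℝ)/3) :=
              mul_le_mul_of_nonneg_right hμy hx4.le
          _ = (1 - μ*y) ^ (-(1:ℝ)/3) := by rw [mul_comm]; exact hxe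
          _ ≤ 1 := hle1
      rw [hDdef]; dsimp only
      nlinarith [mul_le_mul_of_nonneg_left hkey (by linarith : (0:ℝ) ≤ 2*μ/9)]
  -- strict monotone on Iio (1/μ)
  have hIio : ∀ y : ℝ, y ∈ Set.Iio (1/μ) ↔ 1 - μ * y > 0 := by
    intro y
    constructor
    · intro h
      have : μ * y < μ * (1/μ) := by
        exact mul_lt_mul_of_pos_left h hμ0
      rw [mul_one_div_cancel (ne_of_gt hμ0)] at this
      linarith
    · intro h
      have : y * μ < 1 := by nlinarith
      exact (lt_div_iff₀ hμ0).mpr this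
  have hcont : ContinuousOn F (Set.Iio (1/μ)) := by
    intro y hy
    exact ((hD y ((hIio y).mp hy)).continuousAt).continuousWithinAt
  have hmono : StrictMonoOn F (Set.Iio (1/μ)) := by
    apply strictMonoOn_of_deriv_pos (convex_Iio _) hcont
    intro x hx
    rw [interior_Iio] at hx
    rw [(hD x ((hIio x).mp hx)).deriv]
    exact hDpos x ((hIio x).mp hx)
  -- existence via IVT
  obtain ⟨b, hbdef⟩ : ∃ b : ℝ, b = (1+μ)^2 + 1 := ⟨_, rfl⟩
  have hb1 : (1:ℝ) ≤ b := by nlinarith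
  have hb0 : (0:ℝ) < b := by linarith
  have hxa : (1:ℝ) < 1 - μ * (-b) := by nlinarith
  have hxa0 : (0:ℝ) < 1 - μ * (-b) := by linarith
  -- F (-b) < 0
  have hFa : F (-b) < 0 := by
    have hxle : 1 - μ * (-b) ≤ (1+μ) * b := by nlinarith
    have hx2 : (1 - μ * (-b))^2 < b^3 := by
      have h1 : (1 - μ*(-b))^2 ≤ ((1+μ)*b)^2 := by
        nlinarith [mul_self_le_mul_self hxa0.le hxle]
      have h2 : ((1+μ)*b)^2 = b^3 - b^2 := by rw [hbdef]; ring
      linarith [pow_pos hb0 2]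
    have hx23 : (1 - μ * (-b)) ^ ((2:ℝ)/3) < b := by
      have e1 : (1 - μ * (-b)) ^ ((2:ℝ)/3) = ((1 - μ * (-b))^(2:ℕ)) ^ ((1:ℝ)/3) := by
        rw [← Real.rpow_natCast (1 - μ * (-b)) 2, ← Real.rpow_mul hxa0.le]
        norm_num
      have e2 : b = (b^(3:ℕ)) ^ ((1:ℝ)/3) := by
        rw [← Real.rpow_natCast b 3, ← Real.rpow_mul hb0.le]
        norm_num
      calc (1 - μ * (-b)) ^ ((2:ℝ)/3)
          = ((1 - μ * (-b))^(2:ℕ)) ^ ((1:ℝ)/3) := e1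
        _ < (b^(3:ℕ)) ^ ((1:ℝ)/3) :=
            Real.rpow_lt_rpow (by positivity) (by exact_mod_cast hx2) (by norm_num)
        _ = b := e2.symm
    have hmidpos : 0 < (1 - μ * (-b)) ^ ((2:ℝ)/3 - 1) := Real.rpow_pos_of_pos hxa0 _
    rw [hFdef]
    dsimp only
    nlinarith [mul_pos (mul_pos hb0 hmidpos) hμ0]
  have hF0 : F 0 = 1 := by
    have h1 : (1 - μ * 0 : ℝ) = 1 := by ring
    rw [hFdef]
    dsimp only
    rw [h1, Real.one_rpow]
    ring
  have hsub : Set.Icc (-b) 0 ⊆ Set.Iio (1/μ) := by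
    intro z hz
    have : (0:ℝ) < 1/μ := by positivity
    exact lt_of_le_of_lt hz.2 this
  obtain ⟨yp, hypmem, hypeq⟩ :=
    intermediate_value_Icc (by linarith : (-b) ≤ 0) (hcont.mono hsub)
      (⟨hFa.le, by rw [hF0]; norm_num⟩ : (0:ℝ) ∈ Set.Icc (F (-b)) (F 0))
  have hyp0 : yp < 0 := by
    rcases lt_or_eq_of_le hypmem.2 with h | h
    · exact h
    · exfalso; rw [h, hF0] at hypeq; norm_num at hypeq
  have hypIio : yp ∈ Set.Iio (1/μ) := hsub hypmem
  have hypx : 1 - μ * yp > 0 := (hIio yp).mp hypIio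
  refine ⟨yp, hyp0, ?_, ?_⟩
  · rw [hEF yp hypx]; exact hypeq
  · intro z hz hzE
    have hzIio : z ∈ Set.Iio (1/μ) := (hIio z).mpr hz
    have hFz : F z = 0 := by rw [← hEF z hz]; exact hzE
    exact hmono.injOn hzIio hypIio (by rw [hFz, hypeq])
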